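/- For every self-adjoint operator D on a finite-dimensional complex inner product space W and every nonnegative real number d, there exists a unique real number t such that tE + D is positive semidefinite and det(tE + D) = d. -/

import Mathlib

open scoped InnerProductSpace

/-- For every self-adjoint (symmetric) operator `D` on a finite-dimensional complex
inner product space `W` (of dimension at least 1) and every nonnegative real `d`,
there is a unique real `t` such that `t • id + D` is positive semidefinite and
`det (t • id + D) = d`. -/
theorem unique_shift_selfAdjoint_posSemidef_det
    (W : Type*) [NormedAddCommGroup W] [InnerProductSpace ℂ W]
    [FiniteDimensional ℂ W] (hW : 1 ≤ Module.finrank ℂ W)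
    (D : W →ₗ[ℂ] W) (hD : D.IsSymmetric) (d : ℝ) (hd : 0 ≤ d) :
    ∃! t : ℝ,
      (∀ v : W, 0 ≤ (⟪((t : ℂ) • (LinearMap.id : W →ₗ[ℂ] W) + D) v, v⟫_ℂ).re) ∧
      LinearMap.det ((t : ℂ) • (LinearMap.id : W →ₗ[ℂ] W) + D) = (d : ℂ) := by
  set n := Module.finrank ℂ W with hn
  have hn' : Module.finrank ℂ W = n := rfl
  set b := hD.eigenvectorBasis hn' with hb
  set μ := hD.eigenvalues hn' with hμ
  set A : ℝ → (W →ₗ[ℂ] W) := fun t => (t : ℂ) • (LinearMap.id : W →ₗ[ℂ] W) + D with hA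
  -- apply on basis vectors
  have hAb : ∀ (t : ℝ) (i : Fin n), A t (b i) = ((t + μ i : ℝ) : ℂ) • b i := by
    intro t i
    simp only [hA, LinearMap.add_apply, LinearMap.smul_apply, LinearMap.id_apply,
      hD.apply_eigenvectorBasis hn' i]
    push_cast
    rw [add_smul]
    congr 1
    rw [hb]
    exact hD.apply_eigenvectorBasis hn' i
  -- determinant formula
  have hdet : ∀ t : ℝ, LinearMap.det (A t) = ((∏ i, (t + μ i) : ℝ) : ℂ) := by
    intro t
    rw [← LinearMap.det_toMatrix b.toBasis]
    have hM : LinearMap.toMatrix b.toBasis b.toBasis (A t)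
        = Matrix.diagonal (fun i => ((t + μ i : ℝ) : ℂ)) := by
      ext i j
      rw [LinearMap.toMatrix_apply, OrthonormalBasis.coe_toBasis, hAb t j, map_smul]
      rcases eq_or_ne i j with rfl | hij
      · simp [OrthonormalBasis.coe_toBasis_repr_apply, OrthonormalBasis.repr_self,
          EuclideanSpace.single_apply, Matrix.diagonal]
      · simp [OrthonormalBasis.coe_toBasis_repr_apply, OrthonormalBasis.repr_self,
          EuclideanSpace.single_apply, Matrix.diagonal, hij, (Ne.symm hij)]
    rw [hM, Matrix.det_diagonal]
    push_cast
    rfl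
  -- repr of A t v
  have hrepr : ∀ (t : ℝ) (v : W) (i : Fin n),
      b.repr (A t v) i = ((t + μ i : ℝ) : ℂ) * b.repr v i := by
    intro t v i
    simp only [hA, LinearMap.add_apply, LinearMap.smul_apply, LinearMap.id_apply, map_add,
      map_smul, PiLp.add_apply, PiLp.smul_apply]
    rw [hb, hD.eigenvectorBasis_apply_self_apply hn' v i]
    simp only [hμ, smul_eq_mul]
    push_cast
    ring_nf
    norm_cast
  have hPSD : ∀ t : ℝ, (∀ v : W, 0 ≤ (⟪A t v, v⟫_ℂ).re) ↔ ∀ i, 0 ≤ t + μ i := by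
    intro t
    constructor
    · intro h i
      have := h (b i)
      rw [hAb t i, inner_smul_left, Complex.conj_ofReal] at this
      have hbi : ⟪b i, b i⟫_ℂ = 1 := by
        rw [@inner_self_eq_norm_sq_to_K ℂ]
        simp [b.orthonormal.1 i]
      rw [hbi, mul_one] at this
      simpa using this
    · intro h v
      have key : ⟪A t v, v⟫_ℂ
          = ((∑ i, (t + μ i) * Complex.normSq (b.repr v i) : ℝ) : ℂ) := by
        rw [← b.repr.inner_map_map (A t v) v, PiLp.inner_apply]
        push_cast
        refine Finset.sum_congr rfl fun i _ => ?_
        rw [RCLike.inner_apply, hrepr t v i, map_mul, Complex.conj_ofReal, mul_left_comm,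
          Complex.mul_conj]
        push_cast
        ring
      rw [key, Complex.ofReal_re]
      exact Finset.sum_nonneg fun i _ => mul_nonneg (h i) (Complex.normSq_nonneg _)
  have hdet' : ∀ t : ℝ, (LinearMap.det (A t) = (d : ℂ)) ↔ (∏ i, (t + μ i)) = d := by
    intro t
    rw [hdet t]
    exact_mod_cast Iff.rfl
  have hne : (Finset.univ : Finset (Fin n)).Nonempty := by
    have : Nonempty (Fin n) := Fin.pos_iff_nonempty.mp (by omega)
    exact Finset.univ_nonempty
  set t₀ := Finset.univ.sup' hne (fun i => -μ i) with ht₀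
  have hle : ∀ i : Fin n, -μ i ≤ t₀ := fun i => by
    rw [ht₀]; exact Finset.le_sup' (fun j : Fin n => -μ j) (Finset.mem_univ i)
  have ht₀le : ∀ s : ℝ, t₀ ≤ s ↔ ∀ i, 0 ≤ s + μ i := by
    intro s
    rw [ht₀, Finset.sup'_le_iff]
    constructor
    · intro h i; have := h i (Finset.mem_univ i); linarith
    · intro h i _; have := h i; linarith
  set f : ℝ → ℝ := fun t => ∏ i, (t + μ i) with hf
  have hft₀ : f t₀ = 0 := by
    obtain ⟨i, _, hi⟩ := Finset.exists_mem_eq_sup' hne (fun i => -μ i)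
    exact Finset.prod_eq_zero (Finset.mem_univ i) (by rw [ht₀, hi]; ring)
  have hmono : StrictMonoOn f (Set.Ici t₀) := by
    intro s hs u hu hsu
    rcases eq_or_lt_of_le (Set.mem_Ici.mp hs) with rfl | hs'
    · rw [hft₀]
      exact Finset.prod_pos fun i _ => by have := hle i; linarith
    · exact Finset.prod_lt_prod_of_nonempty
        (fun i _ => by have := hle i; linarith)
        (fun i _ => by linarith) hne
  have hcont : Continuous f :=
    continuous_finset_prod _ fun i _ => continuous_id.add continuous_const
  set T := t₀ + d + 1 with hT
  have hdT : d ≤ f T := by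
    have h1 : ∀ i ∈ (Finset.univ : Finset (Fin n)), d + 1 ≤ T + μ i := fun i _ => by
      have := hle i; rw [hT]; linarith
    calc d ≤ d + 1 := by linarith
      _ ≤ (d + 1) ^ n := le_self_pow₀ (by linarith) (by omega)
      _ = ∏ _i : Fin n, (d + 1) := by
          rw [Finset.prod_const, Finset.card_univ, Fintype.card_fin]
      _ ≤ f T := Finset.prod_le_prod (fun i _ => by linarith) h1
  have ht₀T : t₀ ≤ T := by rw [hT]; linarith
  have hIcc : d ∈ Set.Icc (f t₀) (f T) := Set.mem_Icc.mpr ⟨by rw [hft₀]; exact hd, hdT⟩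
  obtain ⟨t, htmem, htval⟩ := intermediate_value_Icc ht₀T hcont.continuousOn hIcc
  refine ⟨t, ⟨(hPSD t).mpr fun i => (ht₀le t).mp htmem.1 i, (hdet' t).mpr htval⟩, ?_⟩
  rintro s ⟨hs1, hs2⟩
  have hst₀ : t₀ ≤ s := (ht₀le s).mpr ((hPSD s).mp hs1)
  exact hmono.injOn (Set.mem_Ici.mpr hst₀) (Set.mem_Ici.mpr htmem.1)
    (by rw [htval]; exact (hdet' s).mp hs2)
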